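/- For every ε > 0 there exists K > 0 such that for all k ∈ ℂ with |k| ≥ K and all x ∈ [0,ℓ] one has |∫₀ˣ cos(k(x−2t)) g(t) dt| ≤ ε · e^{|Im k| x}. -/

import Mathlib

open MeasureTheory intervalIntegral Real

/-- `‖cos z‖ ≤ exp |Im z|`. -/
lemma norm_complex_cos_le_exp (z : ℂ) : ‖Complex.cos z‖ ≤ Real.exp |z.im| := by
  have ha : ‖Complex.exp (z * Complex.I)‖ = Real.exp (-z.im) := by
    rw [Complex.norm_exp, Complex.mul_I_re]
  have hb : ‖Complex.exp (-z * Complex.I)‖ = Real.exp z.im := by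
    rw [Complex.norm_exp]
    simp [Complex.mul_I_re]
  have h1 : Real.exp (-z.im) ≤ Real.exp |z.im| := Real.exp_le_exp.2 (neg_le_abs _)
  have h2 : Real.exp z.im ≤ Real.exp |z.im| := Real.exp_le_exp.2 (le_abs_self _)
  have htri := norm_add_le (Complex.exp (z * Complex.I)) (Complex.exp (-z * Complex.I))
  rw [Complex.cos, norm_div]
  have h2n : ‖(2 : ℂ)‖ = 2 := by norm_num
  rw [h2n, div_le_iff₀ (by norm_num : (0:ℝ) < 2)]
  rw [ha, hb] at htri
  linarith

/-- `‖sin z‖ ≤ exp |Im z|`. -/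
lemma norm_complex_sin_le_exp (z : ℂ) : ‖Complex.sin z‖ ≤ Real.exp |z.im| := by
  have ha : ‖Complex.exp (z * Complex.I)‖ = Real.exp (-z.im) := by
    rw [Complex.norm_exp, Complex.mul_I_re]
  have hb : ‖Complex.exp (-z * Complex.I)‖ = Real.exp z.im := by
    rw [Complex.norm_exp]
    simp [Complex.mul_I_re]
  have h1 : Real.exp (-z.im) ≤ Real.exp |z.im| := Real.exp_le_exp.2 (neg_le_abs _)
  have h2 : Real.exp z.im ≤ Real.exp |z.im| := Real.exp_le_exp.2 (le_abs_self _)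
  have htri := norm_sub_le (Complex.exp (-z * Complex.I)) (Complex.exp (z * Complex.I))
  rw [Complex.sin, norm_div, norm_mul, Complex.norm_I, mul_one]
  have h2n : ‖(2 : ℂ)‖ = 2 := by norm_num
  rw [h2n, div_le_iff₀ (by norm_num : (0:ℝ) < 2)]
  rw [ha, hb] at htri
  linarith

/-- imaginary part of `k * r` for real `r`. -/
lemma im_mul_ofReal (k : ℂ) (r : ℝ) : (k * (r : ℂ)).im = k.im * r := by
  simp [Complex.mul_im]

lemma norm_cos_kxt_le (k : ℂ) (x t : ℝ) (ht : 0 ≤ t) (htx : t ≤ x) :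
    ‖Complex.cos (k * ((x : ℂ) - 2 * (t : ℂ)))‖ ≤ Real.exp (|k.im| * x) := by
  have hcast : (x : ℂ) - 2 * (t : ℂ) = ((x - 2 * t : ℝ) : ℂ) := by push_cast; ring
  refine (norm_complex_cos_le_exp _).trans (Real.exp_le_exp.2 ?_)
  rw [hcast, im_mul_ofReal, abs_mul]
  have : |x - 2 * t| ≤ x := abs_le.2 ⟨by linarith, by linarith⟩
  calc |k.im| * |x - 2 * t| ≤ |k.im| * x := by
        exact mul_le_mul_of_nonneg_left this (abs_nonneg _)

lemma norm_sin_kxt_le (k : ℂ) (x t : ℝ) (ht : 0 ≤ t) (htx : t ≤ x) :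
    ‖Complex.sin (k * ((x : ℂ) - 2 * (t : ℂ)))‖ ≤ Real.exp (|k.im| * x) := by
  have hcast : (x : ℂ) - 2 * (t : ℂ) = ((x - 2 * t : ℝ) : ℂ) := by push_cast; ring
  refine (norm_complex_sin_le_exp _).trans (Real.exp_le_exp.2 ?_)
  rw [hcast, im_mul_ofReal, abs_mul]
  have : |x - 2 * t| ≤ x := abs_le.2 ⟨by linarith, by linarith⟩
  exact mul_le_mul_of_nonneg_left this (abs_nonneg _)

/-- Riemann–Lebesgue type estimate: for `g ∈ L¹((0,ℓ))`, the oscillatory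
integral `∫₀ˣ cos(k(x−2t)) g(t) dt` is `o(e^{|Im k| x})` as `|k| → ∞`, uniformly in
`x ∈ [0, ℓ]`. -/
theorem gelfand_levitan_oscillatory_cos_integral
    (ℓ : ℝ) (hℓ : 0 < ℓ) (g : ℝ → ℝ)
    (hg : IntervalIntegrable g volume 0 ℓ) :
    ∀ ε > 0, ∃ K > 0, ∀ k : ℂ, K ≤ ‖k‖ → ∀ x ∈ Set.Icc (0 : ℝ) ℓ,
      ‖∫ t in (0 : ℝ)..x, Complex.cos (k * ((x : ℂ) - 2 * t)) * (g t : ℂ)‖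
        ≤ ε * Real.exp (|k.im| * x) := by
  intro ε hε
  have h0ℓ : (0 : ℝ) ≤ ℓ := hℓ.le
  have hgIoc : IntegrableOn g (Set.Ioc 0 ℓ) volume := by
    simpa [intervalIntegrable_iff, Set.uIoc_of_le h0ℓ] using hg
  set G : ℝ → ℝ := (Set.Ioc 0 ℓ).indicator g with hGdef
  have hGint : Integrable G volume := (integrable_indicator_iff measurableSet_Ioc).2 hgIoc
  obtain ⟨h₀, h₀supp, h₀close, h₀cont, h₀int⟩ :=
    hGint.exists_hasCompactSupport_integral_sub_le (show (0:ℝ) < ε/4 by positivity)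
  obtain ⟨p, hp⟩ := exists_polynomial_near_of_continuousOn 0 ℓ h₀ h₀cont.continuousOn
    (ε / (4 * ℓ)) (by positivity)
  obtain ⟨M, hM⟩ := (isCompact_Icc (a := (0:ℝ)) (b := ℓ)).exists_bound_of_continuousOn
    ((Polynomial.continuous p)).continuousOn
  obtain ⟨M', hM'⟩ := (isCompact_Icc (a := (0:ℝ)) (b := ℓ)).exists_bound_of_continuousOn
    (Polynomial.continuous p.derivative).continuousOn
  have hM0 : 0 ≤ M := le_trans (norm_nonneg _) (hM 0 ⟨le_refl 0, h0ℓ⟩)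
  have hM'0 : 0 ≤ M' := le_trans (norm_nonneg _) (hM' 0 ⟨le_refl 0, h0ℓ⟩)
  set C : ℝ := 2 * M + ℓ * M' with hCdef
  have hC0 : 0 ≤ C := by positivity
  refine ⟨(2 * C + 2) / ε, by positivity, ?_⟩
  intro k hk x hx
  obtain ⟨hx0, hxℓ⟩ := hx
  have hknorm : (0:ℝ) < ‖k‖ := lt_of_lt_of_le (by positivity) hk
  have hk0 : k ≠ 0 := by simpa using norm_pos_iff.mp hknorm
  set E : ℝ := Real.exp (|k.im| * x) with hEdef
  have hE0 : (0:ℝ) < E := Real.exp_pos _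
  -- basic integrability
  have cosCont : Continuous fun t : ℝ => Complex.cos (k * ((x : ℂ) - 2 * (t : ℂ))) := by
    fun_prop
  have hsub : Set.uIcc (0:ℝ) x ⊆ Set.uIcc (0:ℝ) ℓ := by
    rw [Set.uIcc_of_le hx0, Set.uIcc_of_le h0ℓ]
    exact Set.Icc_subset_Icc le_rfl hxℓ
  have hgx : IntervalIntegrable g volume 0 x := hg.mono_set hsub
  set d : ℝ → ℝ := fun t => g t - p.eval t with hddef
  have hdℓ : IntervalIntegrable d volume 0 ℓ :=
    hg.sub ((Polynomial.continuous p).intervalIntegrable 0 ℓ)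
  have hdx : IntervalIntegrable d volume 0 x := hdℓ.mono_set hsub
  have hdxC : IntervalIntegrable (fun t => ((d t : ℝ) : ℂ)) volume 0 x := by
    rw [intervalIntegrable_iff] at hdx ⊢
    exact hdx.ofReal
  have hI1int : IntervalIntegrable
      (fun t => Complex.cos (k * ((x : ℂ) - 2 * (t : ℂ))) * ((d t : ℝ) : ℂ)) volume 0 x :=
    hdxC.continuousOn_mul cosCont.continuousOn
  have hI2int : IntervalIntegrable
      (fun t => Complex.cos (k * ((x : ℂ) - 2 * (t : ℂ))) * ((p.eval t : ℝ) : ℂ)) volume 0 x :=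
    ((Complex.continuous_ofReal.comp (Polynomial.continuous p)).intervalIntegrable 0 x).continuousOn_mul cosCont.continuousOn
  -- splitting the integral
  have hsplit : (∫ t in (0:ℝ)..x, Complex.cos (k * ((x:ℂ) - 2 * t)) * (g t : ℂ))
      = (∫ t in (0:ℝ)..x, Complex.cos (k * ((x:ℂ) - 2 * (t:ℂ))) * ((d t : ℝ) : ℂ))
      + ∫ t in (0:ℝ)..x, Complex.cos (k * ((x:ℂ) - 2 * (t:ℂ))) * ((p.eval t : ℝ) : ℂ) := by
    rw [← intervalIntegral.integral_add hI1int hI2int]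
    apply intervalIntegral.integral_congr
    intro t _
    simp only [hddef]
    push_cast
    ring
  -- L¹ smallness of d on [0, x]
  have habs_int : IntervalIntegrable (fun t => |d t|) volume 0 ℓ := by
    simpa [Real.norm_eq_abs] using hdℓ.norm
  have habs_intx : IntervalIntegrable (fun t => |d t|) volume 0 x := by
    simpa [Real.norm_eq_abs] using hdx.norm
  have hgh_int : IntervalIntegrable (fun t => |g t - h₀ t|) volume 0 ℓ := by
    simpa [Real.norm_eq_abs] using (hg.sub (h₀cont.intervalIntegrable 0 ℓ)).norm
  have hhp_int : IntervalIntegrable (fun t => |h₀ t - p.eval t|) volume 0 ℓ := by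
    simpa [Real.norm_eq_abs] using
      ((h₀cont.sub (Polynomial.continuous p)).intervalIntegrable 0 ℓ).norm
  have hA : (∫ t in (0:ℝ)..ℓ, |g t - h₀ t|) ≤ ε/4 := by
    rw [intervalIntegral.integral_of_le h0ℓ]
    have heq : (∫ t in Set.Ioc (0:ℝ) ℓ, |g t - h₀ t|) = ∫ t in Set.Ioc (0:ℝ) ℓ, ‖G t - h₀ t‖ := by
      apply setIntegral_congr_fun measurableSet_Ioc
      intro t ht
      rw [hGdef]
      simp [Set.indicator_of_mem ht, Real.norm_eq_abs]
    rw [heq]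
    exact le_trans (setIntegral_le_integral ((hGint.sub h₀int).norm)
      (Filter.Eventually.of_forall fun t => norm_nonneg _)) h₀close
  have hB : (∫ t in (0:ℝ)..ℓ, |h₀ t - p.eval t|) ≤ ε/4 := by
    have hle : ∀ t ∈ Set.Icc (0:ℝ) ℓ, |h₀ t - p.eval t| ≤ ε/(4*ℓ) := by
      intro t ht
      have := hp t ht
      rw [abs_sub_comm] at this
      linarith
    calc (∫ t in (0:ℝ)..ℓ, |h₀ t - p.eval t|) ≤ ∫ _t in (0:ℝ)..ℓ, ε/(4*ℓ) :=
          intervalIntegral.integral_mono_on h0ℓ hhp_int intervalIntegrable_const hle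
      _ = ℓ * (ε/(4*ℓ)) := by rw [intervalIntegral.integral_const]; simp [smul_eq_mul]
      _ = ε/4 := by field_simp
  have hd_close : (∫ t in (0:ℝ)..x, |d t|) ≤ ε/2 := by
    have step1 : (∫ t in (0:ℝ)..x, |d t|) ≤ ∫ t in (0:ℝ)..ℓ, |d t| :=
      intervalIntegral.integral_mono_interval le_rfl hx0 hxℓ
        (Filter.Eventually.of_forall fun t => abs_nonneg _) habs_int
    have step2 : (∫ t in (0:ℝ)..ℓ, |d t|)
        ≤ ∫ t in (0:ℝ)..ℓ, (|g t - h₀ t| + |h₀ t - p.eval t|) := by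
      apply intervalIntegral.integral_mono_on h0ℓ habs_int (hgh_int.add hhp_int)
      intro t _
      simpa [hddef] using abs_sub_le (g t) (h₀ t) (p.eval t)
    have step3 : (∫ t in (0:ℝ)..ℓ, (|g t - h₀ t| + |h₀ t - p.eval t|))
        = (∫ t in (0:ℝ)..ℓ, |g t - h₀ t|) + ∫ t in (0:ℝ)..ℓ, |h₀ t - p.eval t| :=
      intervalIntegral.integral_add hgh_int hhp_int
    linarith
  -- bound for the first (remainder) integral
  have hI1 : ‖∫ t in (0:ℝ)..x, Complex.cos (k * ((x:ℂ) - 2 * (t:ℂ))) * ((d t : ℝ) : ℂ)‖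
      ≤ E * (ε/2) := by
    calc ‖∫ t in (0:ℝ)..x, Complex.cos (k * ((x:ℂ) - 2 * (t:ℂ))) * ((d t : ℝ) : ℂ)‖
        ≤ ∫ t in (0:ℝ)..x, ‖Complex.cos (k * ((x:ℂ) - 2 * (t:ℂ))) * ((d t : ℝ) : ℂ)‖ :=
          intervalIntegral.norm_integral_le_integral_norm hx0
      _ ≤ ∫ t in (0:ℝ)..x, E * |d t| := by
          apply intervalIntegral.integral_mono_on hx0 hI1int.norm (habs_intx.const_mul E)
          intro t ht
          rw [norm_mul, Complex.norm_real, Real.norm_eq_abs]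
          exact mul_le_mul_of_nonneg_right (norm_cos_kxt_le k x t ht.1 ht.2) (abs_nonneg _)
      _ = E * ∫ t in (0:ℝ)..x, |d t| := intervalIntegral.integral_const_mul E _
      _ ≤ E * (ε/2) := mul_le_mul_of_nonneg_left hd_close hE0.le
  -- integration by parts for the polynomial part
  set u : ℝ → ℂ := fun t => ((p.eval t : ℝ) : ℂ) with hudef
  set u' : ℝ → ℂ := fun t => ((p.derivative.eval t : ℝ) : ℂ) with hu'def
  set v : ℝ → ℂ := fun t => -Complex.sin (k * ((x:ℂ) - 2 * (t:ℂ))) / (2 * k) with hvdef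
  set v' : ℝ → ℂ := fun t => Complex.cos (k * ((x:ℂ) - 2 * (t:ℂ))) with hv'def
  have hu : ∀ t ∈ Set.uIcc (0:ℝ) x, HasDerivAt u (u' t) t := fun t _ =>
    (p.hasDerivAt t).ofReal_comp
  have hv : ∀ t ∈ Set.uIcc (0:ℝ) x, HasDerivAt v (v' t) t := by
    intro t _
    have h1 : HasDerivAt (fun z : ℂ => (x:ℂ) - 2 * z) (-2) (t:ℂ) := by
      simpa using ((hasDerivAt_id (t:ℂ)).const_mul (2:ℂ)).const_sub (x:ℂ)
    have hinner : HasDerivAt (fun z : ℂ => k * ((x:ℂ) - 2 * z)) (k * (-2)) (t:ℂ) := by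
      simpa using h1.const_mul k
    have hsin := hinner.csin
    have hdiv := (hsin.neg).div_const (2*k)
    have hfin := hdiv.comp_ofReal
    have h2k0 : (2:ℂ) * k ≠ 0 := by simp [hk0]
    have hrw : -(Complex.cos (k * ((x:ℂ) - 2 * (t:ℂ))) * (k * -2)) / (2*k)
        = Complex.cos (k * ((x:ℂ) - 2 * (t:ℂ))) := by
      rw [show -(Complex.cos (k * ((x:ℂ) - 2 * (t:ℂ))) * (k * -2))
          = (2*k) * Complex.cos (k * ((x:ℂ) - 2 * (t:ℂ))) from by ring,
        mul_div_cancel_left₀ _ h2k0]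
    rw [hrw] at hfin
    exact hfin
  have hu'int : IntervalIntegrable u' volume 0 x :=
    (Complex.continuous_ofReal.comp (Polynomial.continuous p.derivative)).intervalIntegrable 0 x
  have hv'int : IntervalIntegrable v' volume 0 x := cosCont.intervalIntegrable 0 x
  have hparts := intervalIntegral.integral_mul_deriv_eq_deriv_mul hu hv hu'int hv'int
  have hI2eq : (∫ t in (0:ℝ)..x, Complex.cos (k * ((x:ℂ) - 2 * (t:ℂ))) * ((p.eval t : ℝ) : ℂ))
      = ∫ t in (0:ℝ)..x, u t * v' t :=
    intervalIntegral.integral_congr fun t _ => mul_comm _ _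
  have h2k : (0:ℝ) < 2 * ‖k‖ := by positivity
  have hvB : ∀ t, 0 ≤ t → t ≤ x → ‖v t‖ ≤ E / (2 * ‖k‖) := by
    intro t h1t h2t
    have hnv : ‖v t‖ = ‖Complex.sin (k * ((x:ℂ) - 2 * (t:ℂ)))‖ / (2 * ‖k‖) := by
      simp only [hvdef, norm_div, norm_neg, norm_mul]
      norm_num
    rw [hnv]
    gcongr
    exact norm_sin_kxt_le k x t h1t h2t
  have hux : ‖u x‖ ≤ M := by simpa [hudef] using hM x ⟨hx0, hxℓ⟩
  have hu0 : ‖u 0‖ ≤ M := by simpa [hudef] using hM 0 ⟨le_rfl, h0ℓ⟩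
  have h3 : ‖∫ t in (0:ℝ)..x, u' t * v t‖ ≤ M' * (E/(2*‖k‖)) * ℓ := by
    have hbound : ∀ t ∈ Set.uIoc (0:ℝ) x, ‖u' t * v t‖ ≤ M' * (E/(2*‖k‖)) := by
      intro t ht
      rw [Set.uIoc_of_le hx0] at ht
      rw [norm_mul]
      have h1 : ‖u' t‖ ≤ M' := by
        simpa [hu'def] using hM' t ⟨ht.1.le, ht.2.trans hxℓ⟩
      exact mul_le_mul h1 (hvB t ht.1.le ht.2) (norm_nonneg _) (le_trans (norm_nonneg _) h1)
    calc ‖∫ t in (0:ℝ)..x, u' t * v t‖ ≤ M' * (E/(2*‖k‖)) * |x - 0| :=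
          intervalIntegral.norm_integral_le_of_norm_le_const hbound
      _ = M' * (E/(2*‖k‖)) * x := by rw [sub_zero, abs_of_nonneg hx0]
      _ ≤ M' * (E/(2*‖k‖)) * ℓ := by
          apply mul_le_mul_of_nonneg_left hxℓ
          positivity
  have hkε : 2 * C + 2 ≤ ε * ‖k‖ := by
    rw [div_le_iff₀ hε] at hk
    linarith
  have hCk : C ≤ ε * ‖k‖ := le_trans (by linarith) hkε
  have hI2 : ‖∫ t in (0:ℝ)..x, u t * v' t‖ ≤ (ε/2) * E := by
    rw [hparts]
    have step : ‖u x * v x - u 0 * v 0 - ∫ t in (0:ℝ)..x, u' t * v t‖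
        ≤ M * (E/(2*‖k‖)) + M * (E/(2*‖k‖)) + M' * (E/(2*‖k‖)) * ℓ := by
      have t1 : ‖u x * v x‖ ≤ M * (E/(2*‖k‖)) := by
        rw [norm_mul]
        exact mul_le_mul hux (hvB x hx0 le_rfl) (norm_nonneg _) hM0
      have t2 : ‖u 0 * v 0‖ ≤ M * (E/(2*‖k‖)) := by
        rw [norm_mul]
        exact mul_le_mul hu0 (hvB 0 le_rfl hx0) (norm_nonneg _) hM0
      calc ‖u x * v x - u 0 * v 0 - ∫ t in (0:ℝ)..x, u' t * v t‖
          ≤ ‖u x * v x - u 0 * v 0‖ + ‖∫ t in (0:ℝ)..x, u' t * v t‖ := norm_sub_le _ _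
        _ ≤ ‖u x * v x‖ + ‖u 0 * v 0‖ + ‖∫ t in (0:ℝ)..x, u' t * v t‖ := by
            linarith [norm_sub_le (u x * v x) (u 0 * v 0)]
        _ ≤ M * (E/(2*‖k‖)) + M * (E/(2*‖k‖)) + M' * (E/(2*‖k‖)) * ℓ := by
            linarith
    refine step.trans ?_
    have heq : M * (E/(2*‖k‖)) + M * (E/(2*‖k‖)) + M' * (E/(2*‖k‖)) * ℓ
        = C * E / (2 * ‖k‖) := by
      rw [hCdef]; ring
    rw [heq, div_le_iff₀ h2k]
    calc C * E ≤ (ε * ‖k‖) * E := mul_le_mul_of_nonneg_right hCk hE0.le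
      _ = ε/2 * E * (2 * ‖k‖) := by ring
  -- conclusion
  rw [hsplit]
  calc ‖(∫ t in (0:ℝ)..x, Complex.cos (k * ((x:ℂ) - 2 * (t:ℂ))) * ((d t : ℝ) : ℂ))
        + ∫ t in (0:ℝ)..x, Complex.cos (k * ((x:ℂ) - 2 * (t:ℂ))) * ((p.eval t : ℝ) : ℂ)‖
      ≤ ‖∫ t in (0:ℝ)..x, Complex.cos (k * ((x:ℂ) - 2 * (t:ℂ))) * ((d t : ℝ) : ℂ)‖
        + ‖∫ t in (0:ℝ)..x, Complex.cos (k * ((x:ℂ) - 2 * (t:ℂ))) * ((p.eval t : ℝ) : ℂ)‖ :=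
        norm_add_le _ _
    _ ≤ E * (ε/2) + (ε/2) * E := add_le_add hI1 (hI2eq ▸ hI2)
    _ = ε * E := by ring
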